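/- Let c₀ ≠ 0 be a real constant and let f be twice differentiable on an open interval satisfying f''(u) + (2c₀/(c₀²+1)) f'(u)² + 2c₀ = 0 with f'' nowhere zero. Then there exist constants a, b such that f(u) = ((c₀²+1)/(2c₀)) ln |cos((2c₀/√(c₀²+1)) u - a)| + b. -/

import Mathlib

theorem stmt_5 (c₀ α β : ℝ) (hc₀ : c₀ ≠ 0) (f : ℝ → ℝ)
    (hd1 : ∀ u ∈ Set.Ioo α β, DifferentiableAt ℝ f u)
    (hd2 : ∀ u ∈ Set.Ioo α β, DifferentiableAt ℝ (deriv f) u)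
    (hne : ∀ u ∈ Set.Ioo α β, deriv (deriv f) u ≠ 0)
    (hode : ∀ u ∈ Set.Ioo α β,
      deriv (deriv f) u + (2 * c₀ / (c₀ ^ 2 + 1)) * (deriv f u) ^ 2 + 2 * c₀ = 0) :
    ∃ a b : ℝ, ∀ u ∈ Set.Ioo α β,
      f u = ((c₀ ^ 2 + 1) / (2 * c₀)) *
          Real.log |Real.cos ((2 * c₀ / Real.sqrt (c₀ ^ 2 + 1)) * u - a)| + b := by
  rcases le_or_gt β α with hba | hab
  · exact ⟨0, 0, fun u hu => absurd hu (by simp [Set.Ioo_eq_empty (not_lt.2 hba)])⟩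
  set s : ℝ := Real.sqrt (c₀ ^ 2 + 1) with hs_def
  have hs2 : s ^ 2 = c₀ ^ 2 + 1 := Real.sq_sqrt (by positivity)
  have hs : 0 < s := Real.sqrt_pos.2 (by positivity)
  have hsne : s ≠ 0 := hs.ne'
  set u₀ : ℝ := (α + β) / 2 with hu₀_def
  have hu₀ : u₀ ∈ Set.Ioo α β := ⟨by linarith, by linarith⟩
  -- constancy helper
  have key : ∀ g : ℝ → ℝ, (∀ x ∈ Set.Ioo α β, HasDerivAt g 0 x) →
      ∀ u ∈ Set.Ioo α β, g u = g u₀ := by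
    intro g hg u hu
    apply Convex.is_const_of_fderivWithin_eq_zero (convex_Ioo α β)
      (fun x hx => (hg x hx).differentiableAt.differentiableWithinAt)
      (fun x hx => ?_) hu hu₀
    rw [fderivWithin_of_isOpen isOpen_Ioo hx, (hg x hx).hasFDerivAt.fderiv]
    ext y; simp
  set φ : ℝ → ℝ := fun u => Real.arctan (deriv f u / s) with hφ_def
  have hφ : ∀ u ∈ Set.Ioo α β, HasDerivAt (fun u => φ u + (2 * c₀ / s) * u) 0 u := by
    intro u hu
    have h1 : HasDerivAt (fun u => deriv f u / s) (deriv (deriv f) u / s) u :=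
      (hd2 u hu).hasDerivAt.div_const s
    have h2 := (Real.hasDerivAt_arctan (deriv f u / s)).comp u h1
    have h3 : HasDerivAt (fun u : ℝ => (2 * c₀ / s) * u) (2 * c₀ / s) u := by
      simpa using (hasDerivAt_id u).const_mul (2 * c₀ / s)
    have h4 := h2.add h3
    convert h4 using 1
    case e'_4 => rfl
    case e'_5 => rfl
    case e'_8 => rfl
    have hH' : deriv (deriv f) u = -(2 * c₀ / s ^ 2) * (deriv f u) ^ 2 - 2 * c₀ := by
      rw [hs2]; linarith [hode u hu]
    rw [hH']
    have hpos : (1 : ℝ) + (deriv f u / s) ^ 2 ≠ 0 := by positivity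
    field_simp
    ring
  obtain ⟨a, ha⟩ : ∃ a : ℝ, ∀ u ∈ Set.Ioo α β, φ u = a - (2 * c₀ / s) * u := by
    refine ⟨φ u₀ + (2 * c₀ / s) * u₀, fun u hu => ?_⟩
    have := key _ hφ u hu
    linarith
  have hcos : ∀ u ∈ Set.Ioo α β, 0 < Real.cos ((2 * c₀ / s) * u - a) := by
    intro u hu
    have : (2 * c₀ / s) * u - a = -(φ u) := by rw [ha u hu]; ring
    rw [this, Real.cos_neg]
    exact Real.cos_arctan_pos _
  have hderiv : ∀ u ∈ Set.Ioo α β,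
      deriv f u = -s * Real.tan ((2 * c₀ / s) * u - a) := by
    intro u hu
    have h1 : (2 * c₀ / s) * u - a = -(φ u) := by rw [ha u hu]; ring
    rw [h1, Real.tan_neg, hφ_def]
    simp only []
    rw [Real.tan_arctan]
    field_simp
  set G : ℝ → ℝ := fun u => (s ^ 2 / (2 * c₀)) * Real.log (Real.cos ((2 * c₀ / s) * u - a))
    with hG_def
  have hG : ∀ u ∈ Set.Ioo α β, HasDerivAt (fun u => f u - G u) 0 u := by
    intro u hu
    have h1 : HasDerivAt (fun u : ℝ => (2 * c₀ / s) * u - a) (2 * c₀ / s) u := by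
      simpa using ((hasDerivAt_id u).const_mul (2 * c₀ / s)).sub_const a
    have h2 : HasDerivAt (fun u : ℝ => Real.cos ((2 * c₀ / s) * u - a))
        (-Real.sin ((2 * c₀ / s) * u - a) * (2 * c₀ / s)) u :=
      (Real.hasDerivAt_cos _).comp u h1
    have h3 : Real.cos ((2 * c₀ / s) * u - a) ≠ 0 := (hcos u hu).ne'
    have h4 := (Real.hasDerivAt_log h3).comp u h2
    have h5 := h4.const_mul (s ^ 2 / (2 * c₀))
    have h6 := (hd1 u hu).hasDerivAt
    have h7 := h6.sub h5
    convert h7 using 1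
    case e'_4 => rfl
    case e'_5 => rfl
    case e'_8 => rfl
    rw [hderiv u hu, Real.tan_eq_sin_div_cos]
    generalize Real.sin ((2 * c₀ / s) * u - a) = S at *
    generalize hC : Real.cos ((2 * c₀ / s) * u - a) = C at *
    field_simp
    ring
  refine ⟨a, f u₀ - G u₀, fun u hu => ?_⟩
  have := key _ hG u hu
  have hfu : f u = G u + (f u₀ - G u₀) := by linarith
  rw [hfu, hG_def]
  rw [abs_of_pos (hcos u hu), hs2]
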